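/- Let A and B be c.e. subsets of ℕ with B ⊂ₛ A (B a small subset of A). Then every split Y ⊑ A with Y ⊆* B is computable. -/

import Mathlib

/-- A set of natural numbers is computably enumerable if it is the domain of a
partial computable function. -/
def CE (A : Set ℕ) : Prop := ∃ f : ℕ →. ℕ, Partrec f ∧ A = f.Dom

/-- A set of natural numbers is computable if its membership predicate is computable. -/
def IsComputableSet (A : Set ℕ) : Prop := ComputablePred (· ∈ A)

/-- `X ⊆* Y` : `X ∖ Y` is finite. -/
def SubsetStar (X Y : Set ℕ) : Prop := (X \ Y).Finite

/-- `X ⊑ A` : `X` is a split of the c.e. set `A`, i.e. `X` is c.e. and there is a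
c.e. set `Y` with `X ∩ Y = ∅` and `X ∪ Y = A`. -/
def Split (A X : Set ℕ) : Prop := CE X ∧ ∃ Y : Set ℕ, CE Y ∧ X ∩ Y = ∅ ∧ X ∪ Y = A

/-- `B ⊂ₛ A` : `B` is a small subset of `A`. -/
def SmallSubset (B A : Set ℕ) : Prop :=
  B ⊆ A ∧ ∀ U V : Set ℕ, CE U → CE V → SubsetStar (U ∩ (A \ B)) V → CE ((U \ A) ∪ V)

/-- `B ⊂ₘ A` : `B` is a major subset of `A`. -/
def MajorSubset (B A : Set ℕ) : Prop :=
  B ⊆ A ∧ (A \ B).Infinite ∧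
    ∀ W : Set ℕ, CE W → A ∪ W = Set.univ → (Set.univ \ (B ∪ W)).Finite

lemma CE_iff_RePred (A : Set ℕ) : CE A ↔ REPred (· ∈ A) := by
  constructor
  · rintro ⟨f, hf, rfl⟩
    exact hf.dom_re
  · intro h
    refine ⟨fun a => (Part.assert (a ∈ A) fun _ => Part.some ()).map fun _ => 0,
      h.map ((Computable.const 0).comp Computable.fst).to₂, ?_⟩
    ext a
    simp [PFun.Dom, Part.assert]

lemma CE_univ : CE (Set.univ : Set ℕ) :=
  ⟨fun _ => Part.some 0, (Computable.const 0).partrec, by ext a; simp [PFun.Dom]⟩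

/-- If `A`, `B` are c.e. with `B ⊂ₛ A`, then every split `Y ⊑ A` with
`Y ⊆* B` is computable. -/
theorem stmt5 (A B : Set ℕ) (hA : CE A) (hB : CE B) (hsmall : SmallSubset B A) :
    ∀ Y : Set ℕ, Split A Y → SubsetStar Y B → IsComputableSet Y := by
  rintro Y ⟨hY, Z, hZ, hdisj, hunion⟩ hYB
  -- Apply smallness with U = univ, V = Z.
  have hsub : SubsetStar (Set.univ ∩ (A \ B)) Z := by
    have : (Set.univ ∩ (A \ B)) \ Z ⊆ Y \ B := by
      rintro x ⟨⟨-, hxA, hxB⟩, hxZ⟩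
      have : x ∈ Y ∪ Z := hunion ▸ hxA
      rcases this with h | h
      · exact ⟨h, hxB⟩
      · exact absurd h hxZ
    exact Set.Finite.subset hYB this
  have hcompl : CE ((Set.univ \ A) ∪ Z) := hsmall.2 Set.univ Z CE_univ hZ hsub
  have hYsubA : Y ⊆ A := hunion ▸ Set.subset_union_left
  have heq : (Set.univ \ A) ∪ Z = Yᶜ := by
    ext x
    constructor
    · rintro (⟨-, hxA⟩ | hxZ)
      · exact fun hxY => hxA (hYsubA hxY)
      · intro hxY
        exact Set.eq_empty_iff_forall_notMem.mp hdisj x ⟨hxY, hxZ⟩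
    · intro hxY
      by_cases hxA : x ∈ A
      · rcases hunion ▸ hxA with h | h
        · exact absurd h hxY
        · exact Or.inr h
      · exact Or.inl ⟨trivial, hxA⟩
  rw [heq] at hcompl
  have h1 : REPred (· ∈ Y) := (CE_iff_RePred Y).mp hY
  have h2 : REPred fun a => ¬ a ∈ Y := by
    have := (CE_iff_RePred Yᶜ).mp hcompl
    exact this.of_eq fun a => by simp [Set.mem_compl_iff]
  exact ComputablePred.computable_iff_re_compl_re'.mpr ⟨h1, h2⟩
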